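/- For a delta-matroid D = (E, F), the set systems D_max = (E, F_max) and D_min = (E, F_min), where F_max and F_min are the collections of maximum and minimum cardinality feasible sets respectively, are matroids. -/

import Mathlib

open Finset

variable {α : Type*}

/-- The twist of a family of feasible sets by a set `A`:
`{A Δ X : X ∈ F}`. -/
def twistF [DecidableEq α] (A : Finset α) (F : Finset (Finset α)) : Finset (Finset α) :=
  F.image (fun X => symmDiff A X)

/-- `D = (E, F)` is a delta-matroid: `F` is nonempty, consists of subsets of `E`,
and satisfies the symmetric exchange axiom. -/
def IsDeltaMatroid [DecidableEq α] (E : Finset α) (F : Finset (Finset α)) : Prop :=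
  F.Nonempty ∧ (∀ X ∈ F, X ⊆ E) ∧
    ∀ X ∈ F, ∀ Y ∈ F, ∀ u ∈ symmDiff X Y,
      ∃ v ∈ symmDiff X Y, symmDiff X {u, v} ∈ F

/-- The width of a set system: max feasible size minus min feasible size. -/
def widthF (F : Finset (Finset α)) : ℕ :=
  (F.image Finset.card).max.getD 0 - (F.image Finset.card).min.getD 0

/-- The twist polynomial `∑_{A ⊆ E} z^{w(D*A)}`, as a polynomial over ℤ. -/
noncomputable def twistPoly [DecidableEq α] (E : Finset α) (F : Finset (Finset α)) :
    Polynomial ℤ :=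
  ∑ A ∈ E.powerset, Polynomial.X ^ widthF (twistF A F)

/-- The maximum-cardinality feasible sets of F. -/
def Fmax [DecidableEq α] (F : Finset (Finset α)) : Finset (Finset α) :=
  F.filter (fun X => ∀ Y ∈ F, Y.card ≤ X.card)

/-- The minimum-cardinality feasible sets of F. -/
def Fmin [DecidableEq α] (F : Finset (Finset α)) : Finset (Finset α) :=
  F.filter (fun X => ∀ Y ∈ F, X.card ≤ Y.card)

/-- Symmetric difference with a pair, one element in `X`, one not. -/
private lemma sd_pair [DecidableEq α] {X : Finset α} {u v : α} (hu : u ∈ X) (hv : v ∉ X) :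
    symmDiff X {u, v} = insert v (X.erase u) := by
  have huv : u ≠ v := fun h => hv (h ▸ hu)
  ext x
  by_cases hxu : x = u <;> by_cases hxv : x = v <;>
    simp [Finset.mem_symmDiff, hxu, hxv, hu, hv, huv, Ne.symm huv]

/-- Complement (in `E`) of an exchange. -/
private lemma compl_exchange [DecidableEq α] {E X : Finset α} {u v : α} (hXE : X ⊆ E)
    (hu : u ∈ X) (hvE : v ∈ E) (hv : v ∉ X) :
    E \ (insert v (X.erase u)) = insert u ((E \ X).erase v) := by
  have huE : u ∈ E := hXE hu
  have huv : u ≠ v := fun h => hv (h ▸ hu)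
  ext x
  by_cases hxu : x = u <;> by_cases hxv : x = v <;>
    simp [hxu, hxv, hu, hv, huE, hvE, huv, Ne.symm huv]

/-- In an equicardinal family, the co-exchange property implies the exchange property.
This is matroid duality in disguise. -/
private lemma coex_to_ex [DecidableEq α] (E : Finset α) (B : Finset (Finset α))
    (hne : B.Nonempty) (hsub : ∀ X ∈ B, X ⊆ E)
    (hco : ∀ X ∈ B, ∀ Y ∈ B, ∀ u ∈ Y \ X, ∃ v ∈ X \ Y, insert u (X.erase v) ∈ B) :
    ∀ X ∈ B, ∀ Y ∈ B, ∀ u ∈ X \ Y, ∃ v ∈ Y \ X, insert v (X.erase u) ∈ B := by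
  classical
  set Base : Set α → Prop := fun S => ∃ C ∈ B, S = (↑E : Set α) \ ↑C with hBase
  obtain ⟨C₀, hC₀⟩ := hne
  have exists_base : ∃ S, Base S := ⟨(↑E : Set α) \ ↑C₀, C₀, hC₀, rfl⟩
  have subset_ground : ∀ S, Base S → S ⊆ (↑E : Set α) := by
    rintro S ⟨C, hC, rfl⟩; exact Set.diff_subset
  have bexch : Matroid.ExchangeProperty Base := by
    rintro S1 S2 ⟨C1, hC1, rfl⟩ ⟨C2, hC2, rfl⟩ a ha
    obtain ⟨⟨haE, haC1⟩, ha2⟩ := ha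
    have haC1' : a ∉ C1 := by simpa using haC1
    have haE' : a ∈ E := by simpa using haE
    have haC2 : a ∈ C2 := by
      by_contra h
      exact ha2 ⟨haE, by simpa using h⟩
    obtain ⟨v, hv, hins⟩ := hco C1 hC1 C2 hC2 a (Finset.mem_sdiff.2 ⟨haC2, haC1'⟩)
    have hvC1 : v ∈ C1 := (Finset.mem_sdiff.1 hv).1
    have hvC2 : v ∉ C2 := (Finset.mem_sdiff.1 hv).2
    have hvE : v ∈ E := hsub C1 hC1 hvC1
    refine ⟨v, ⟨⟨by simpa using hvE, by simpa using hvC2⟩,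
      fun h => (by simpa using h.2 : v ∉ C1) hvC1⟩, ?_⟩
    refine ⟨insert a (C1.erase v), hins, ?_⟩
    have hfe : E \ (insert a (C1.erase v)) = insert v ((E \ C1).erase a) :=
      compl_exchange (hsub C1 hC1) hvC1 haE' haC1'
    calc insert v (((↑E : Set α) \ ↑C1) \ {a})
        = ((insert v ((E \ C1).erase a) : Finset α) : Set α) := by simp
      _ = ((E \ (insert a (C1.erase v)) : Finset α) : Set α) := by rw [hfe]
      _ = (↑E : Set α) \ ↑(insert a (C1.erase v)) := by simp
  let M := Matroid.ofIsBaseOfFinite E.finite_toSet Base exists_base bexch subset_ground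
  have hdual : ∀ C : Finset α, C ∈ B → M✶.IsBase ↑C := by
    intro C hC
    rw [Matroid.dual_isBase_iff']
    exact ⟨⟨C, hC, rfl⟩, Finset.coe_subset.2 (hsub C hC)⟩
  have hdual' : ∀ C : Finset α, C ⊆ E → M✶.IsBase ↑C → C ∈ B := by
    intro C hCE hb
    rw [Matroid.dual_isBase_iff'] at hb
    obtain ⟨⟨C0, hC0, hEq⟩, -⟩ := hb
    have h1 : (↑E : Set α) \ ((↑E : Set α) \ ↑C) = ↑C :=
      Set.diff_diff_cancel_left (Finset.coe_subset.2 hCE)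
    have h2 : (↑E : Set α) \ ((↑E : Set α) \ ↑C0) = ↑C0 :=
      Set.diff_diff_cancel_left (Finset.coe_subset.2 (hsub C0 hC0))
    have hCC0 : (↑C : Set α) = ↑C0 := by
      rw [← h1]
      rw [show ((↑E : Set α) \ ↑C) = (↑E : Set α) \ ↑C0 from hEq]
      exact h2
    rwa [Finset.coe_inj.1 hCC0]
  intro X hX Y hY u hu
  obtain ⟨huX, huY⟩ := Finset.mem_sdiff.1 hu
  have hu' : u ∈ (↑X : Set α) \ ↑Y := ⟨by simpa using huX, by simpa using huY⟩
  obtain ⟨b, hb, hBase'⟩ := M✶.isBase_exchange ↑X ↑Y (hdual X hX) (hdual Y hY) u hu'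
  have hbY : b ∈ Y := by simpa using hb.1
  have hbX : b ∉ X := by simpa using hb.2
  have hcoe : (insert b ((↑X : Set α) \ {u})) = ↑(insert b (X.erase u)) := by simp
  rw [hcoe] at hBase'
  have hsubE : insert b (X.erase u) ⊆ E :=
    Finset.insert_subset (hsub Y hY hbY) ((Finset.erase_subset _ _).trans (hsub X hX))
  exact ⟨b, Finset.mem_sdiff.2 ⟨hbY, hbX⟩, hdual' _ hsubE hBase'⟩

/-- The exchange property implies the co-exchange property (via complementation). -/
private lemma ex_to_coex [DecidableEq α] (E : Finset α) (B : Finset (Finset α))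
    (hne : B.Nonempty) (hsub : ∀ X ∈ B, X ⊆ E)
    (hex : ∀ X ∈ B, ∀ Y ∈ B, ∀ u ∈ X \ Y, ∃ v ∈ Y \ X, insert v (X.erase u) ∈ B) :
    ∀ X ∈ B, ∀ Y ∈ B, ∀ u ∈ Y \ X, ∃ v ∈ X \ Y, insert u (X.erase v) ∈ B := by
  classical
  set C := B.image (E \ ·) with hCdef
  have hneC : C.Nonempty := hne.image _
  have hsubC : ∀ X ∈ C, X ⊆ E := by
    intro X hX
    obtain ⟨Z, hZ, rfl⟩ := Finset.mem_image.1 hX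
    exact Finset.sdiff_subset
  have hcoC : ∀ X' ∈ C, ∀ Y' ∈ C, ∀ u ∈ Y' \ X', ∃ v ∈ X' \ Y',
      insert u (X'.erase v) ∈ C := by
    rintro X' hX' Y' hY' u hu
    obtain ⟨X, hX, rfl⟩ := Finset.mem_image.1 hX'
    obtain ⟨Y, hY, rfl⟩ := Finset.mem_image.1 hY'
    rw [Finset.mem_sdiff] at hu
    have huE : u ∈ E := (Finset.mem_sdiff.1 hu.1).1
    have huY : u ∉ Y := (Finset.mem_sdiff.1 hu.1).2
    have huX : u ∈ X := by
      by_contra h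
      exact hu.2 (Finset.mem_sdiff.2 ⟨huE, h⟩)
    obtain ⟨v, hv, hins⟩ := hex X hX Y hY u (Finset.mem_sdiff.2 ⟨huX, huY⟩)
    have hvY : v ∈ Y := (Finset.mem_sdiff.1 hv).1
    have hvX : v ∉ X := (Finset.mem_sdiff.1 hv).2
    have hvE : v ∈ E := hsub Y hY hvY
    refine ⟨v, Finset.mem_sdiff.2 ⟨Finset.mem_sdiff.2 ⟨hvE, hvX⟩,
      fun h => (Finset.mem_sdiff.1 h).2 hvY⟩, ?_⟩
    rw [← compl_exchange (hsub X hX) huX hvE hvX]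
    exact Finset.mem_image_of_mem _ hins
  intro X hX Y hY u hu
  rw [Finset.mem_sdiff] at hu
  obtain ⟨huY, huX⟩ := hu
  have huE : u ∈ E := hsub Y hY huY
  have hXC : E \ X ∈ C := Finset.mem_image_of_mem _ hX
  have hYC : E \ Y ∈ C := Finset.mem_image_of_mem _ hY
  have hu' : u ∈ (E \ X) \ (E \ Y) := by
    simp only [Finset.mem_sdiff]
    exact ⟨⟨huE, huX⟩, fun h => h.2 huY⟩
  obtain ⟨v, hv, hins⟩ := coex_to_ex E C hneC hsubC hcoC (E \ X) hXC (E \ Y) hYC u hu'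
  rw [Finset.mem_sdiff] at hv
  have hvE : v ∈ E := (Finset.mem_sdiff.1 hv.1).1
  have hvY : v ∉ Y := (Finset.mem_sdiff.1 hv.1).2
  have hvX : v ∈ X := by
    by_contra h
    exact hv.2 (Finset.mem_sdiff.2 ⟨hvE, h⟩)
  obtain ⟨W, hW, hWeq⟩ := Finset.mem_image.1 hins
  have key : E \ W = E \ (insert u (X.erase v)) := by
    rw [hWeq, ← compl_exchange (hsub X hX) hvX huE huX]
  have hIE : insert u (X.erase v) ⊆ E :=
    Finset.insert_subset huE ((Finset.erase_subset _ _).trans (hsub X hX))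
  have hWeq2 : W = insert u (X.erase v) := by
    have h1 : E \ (E \ W) = W := Finset.sdiff_sdiff_eq_self (hsub W hW)
    have h2 : E \ (E \ (insert u (X.erase v))) = insert u (X.erase v) :=
      Finset.sdiff_sdiff_eq_self hIE
    rw [← h1, key, h2]
  exact ⟨v, Finset.mem_sdiff.2 ⟨hvX, hvY⟩, hWeq2 ▸ hW⟩

/-- The easy exchange direction for `Fmax`: adding an element of `Y \ X`. -/
private lemma fmax_easy [DecidableEq α] {E : Finset α} {F : Finset (Finset α)}
    (hD : IsDeltaMatroid E F) :
    ∀ X ∈ Fmax F, ∀ Y ∈ Fmax F, ∀ u, u ∈ Y → u ∉ X →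
      ∃ v, v ∈ X ∧ v ∉ Y ∧ symmDiff X {u, v} ∈ Fmax F := by
  obtain ⟨hne, hsub, hsea⟩ := hD
  intro X hX Y hY u huY huX
  rw [Fmax, Finset.mem_filter] at hX hY
  obtain ⟨hXF, hXmax⟩ := hX
  obtain ⟨hYF, hYmax⟩ := hY
  obtain ⟨v, hv, hZ⟩ := hsea X hXF Y hYF u (Finset.mem_symmDiff.2 (Or.inr ⟨huY, huX⟩))
  have hvX : v ∈ X := by
    by_contra hvX
    have hdisj : Disjoint X {u, v} := by
      rw [Finset.disjoint_right]
      intro a ha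
      rcases Finset.mem_insert.1 ha with rfl | ha
      · exact huX
      · rw [Finset.mem_singleton.1 ha]; exact hvX
    have hZeq : symmDiff X {u, v} = X ∪ {u, v} := by
      rw [hdisj.symmDiff_eq_sup, Finset.sup_eq_union]
    have hss : X ⊂ X ∪ {u, v} := by
      rw [Finset.ssubset_def]
      refine ⟨Finset.subset_union_left, fun h => huX (h ?_)⟩
      exact Finset.mem_union_right _ (Finset.mem_insert_self u _)
    have := hXmax _ hZ
    rw [hZeq] at this
    exact absurd this (not_le.2 (Finset.card_lt_card hss))
  have hvY : v ∉ Y := by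
    rcases Finset.mem_symmDiff.1 hv with ⟨_, h⟩ | ⟨_, h⟩
    · exact h
    · exact absurd hvX h
  have hZeq : symmDiff X {u, v} = insert u (X.erase v) := by
    rw [Finset.pair_comm, sd_pair hvX huX]
  have hcard : (symmDiff X {u, v}).card = X.card := by
    rw [hZeq, Finset.card_insert_of_notMem (fun h => huX (Finset.erase_subset _ _ h)),
      Finset.card_erase_of_mem hvX]
    have : 1 ≤ X.card := Finset.card_pos.2 ⟨v, hvX⟩
    omega
  refine ⟨v, hvX, hvY, Finset.mem_filter.2 ⟨hZ, fun W hW => ?_⟩⟩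
  rw [hcard]
  exact hXmax W hW

/-- The easy exchange direction for `Fmin`: removing an element of `X \ Y`. -/
private lemma fmin_easy [DecidableEq α] {E : Finset α} {F : Finset (Finset α)}
    (hD : IsDeltaMatroid E F) :
    ∀ X ∈ Fmin F, ∀ Y ∈ Fmin F, ∀ u, u ∈ X → u ∉ Y →
      ∃ v, v ∈ Y ∧ v ∉ X ∧ symmDiff X {u, v} ∈ Fmin F := by
  obtain ⟨hne, hsub, hsea⟩ := hD
  intro X hX Y hY u huX huY
  rw [Fmin, Finset.mem_filter] at hX hY
  obtain ⟨hXF, hXmin⟩ := hX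
  obtain ⟨hYF, hYmin⟩ := hY
  obtain ⟨v, hv, hZ⟩ := hsea X hXF Y hYF u (Finset.mem_symmDiff.2 (Or.inl ⟨huX, huY⟩))
  have hvX : v ∉ X := by
    intro hvX
    have hpair : ({u, v} : Finset α) ⊆ X := by
      intro a ha
      rcases Finset.mem_insert.1 ha with rfl | ha
      · exact huX
      · rw [Finset.mem_singleton.1 ha]; exact hvX
    have hZeq : symmDiff X {u, v} = X \ {u, v} := symmDiff_of_ge hpair
    have hss : X \ {u, v} ⊂ X := Finset.sdiff_ssubset hpair ⟨u, Finset.mem_insert_self u _⟩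
    have := hXmin _ hZ
    rw [hZeq] at this
    exact absurd this (not_le.2 (Finset.card_lt_card hss))
  have hvY : v ∈ Y := by
    rcases Finset.mem_symmDiff.1 hv with ⟨h, _⟩ | ⟨h, _⟩
    · exact absurd h hvX
    · exact h
  have hZeq : symmDiff X {u, v} = insert v (X.erase u) := sd_pair huX hvX
  have hcard : (symmDiff X {u, v}).card = X.card := by
    rw [hZeq, Finset.card_insert_of_notMem (fun h => hvX (Finset.erase_subset _ _ h)),
      Finset.card_erase_of_mem huX]
    have : 1 ≤ X.card := Finset.card_pos.2 ⟨u, huX⟩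
    omega
  refine ⟨v, hvY, hvX, Finset.mem_filter.2 ⟨hZ, fun W hW => ?_⟩⟩
  rw [hcard]
  exact hXmin W hW

/-- D_max and D_min are matroids (delta-matroids with equicardinal feasible sets). -/
theorem max_min_matroid [DecidableEq α] (E : Finset α) (F : Finset (Finset α))
    (hD : IsDeltaMatroid E F) :
    (IsDeltaMatroid E (Fmax F) ∧ ∀ X ∈ Fmax F, ∀ Y ∈ Fmax F, X.card = Y.card) ∧
      (IsDeltaMatroid E (Fmin F) ∧ ∀ X ∈ Fmin F, ∀ Y ∈ Fmin F, X.card = Y.card) := by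
  classical
  obtain ⟨hne, hsub, hsea⟩ := hD
  have hD' : IsDeltaMatroid E F := ⟨hne, hsub, hsea⟩
  have hmaxne : (Fmax F).Nonempty := by
    obtain ⟨X, hX, hmax⟩ := F.exists_max_image Finset.card hne
    exact ⟨X, Finset.mem_filter.2 ⟨hX, hmax⟩⟩
  have hminne : (Fmin F).Nonempty := by
    obtain ⟨X, hX, hmin⟩ := F.exists_min_image Finset.card hne
    exact ⟨X, Finset.mem_filter.2 ⟨hX, hmin⟩⟩
  have hmaxsub : ∀ X ∈ Fmax F, X ⊆ E := fun X hX => hsub X (Finset.mem_filter.1 hX).1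
  have hminsub : ∀ X ∈ Fmin F, X ⊆ E := fun X hX => hsub X (Finset.mem_filter.1 hX).1
  have hmaxeq : ∀ X ∈ Fmax F, ∀ Y ∈ Fmax F, X.card = Y.card := by
    intro X hX Y hY
    rw [Fmax, Finset.mem_filter] at hX hY
    exact le_antisymm (hY.2 X hX.1) (hX.2 Y hY.1)
  have hmineq : ∀ X ∈ Fmin F, ∀ Y ∈ Fmin F, X.card = Y.card := by
    intro X hX Y hY
    rw [Fmin, Finset.mem_filter] at hX hY
    exact le_antisymm (hX.2 Y hY.1) (hY.2 X hX.1)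
  have hcoMax : ∀ X ∈ Fmax F, ∀ Y ∈ Fmax F, ∀ u ∈ Y \ X, ∃ v ∈ X \ Y,
      insert u (X.erase v) ∈ Fmax F := by
    intro X hX Y hY u hu
    rw [Finset.mem_sdiff] at hu
    obtain ⟨v, hvX, hvY, hZ⟩ := fmax_easy hD' X hX Y hY u hu.1 hu.2
    refine ⟨v, Finset.mem_sdiff.2 ⟨hvX, hvY⟩, ?_⟩
    rwa [Finset.pair_comm, sd_pair hvX hu.2] at hZ
  have hexMax := coex_to_ex E (Fmax F) hmaxne hmaxsub hcoMax
  have hexMin : ∀ X ∈ Fmin F, ∀ Y ∈ Fmin F, ∀ u ∈ X \ Y, ∃ v ∈ Y \ X,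
      insert v (X.erase u) ∈ Fmin F := by
    intro X hX Y hY u hu
    rw [Finset.mem_sdiff] at hu
    obtain ⟨v, hvY, hvX, hZ⟩ := fmin_easy hD' X hX Y hY u hu.1 hu.2
    refine ⟨v, Finset.mem_sdiff.2 ⟨hvY, hvX⟩, ?_⟩
    rwa [sd_pair hu.1 hvX] at hZ
  have hcoMin := ex_to_coex E (Fmin F) hminne hminsub hexMin
  refine ⟨⟨⟨hmaxne, hmaxsub, ?_⟩, hmaxeq⟩, ⟨⟨hminne, hminsub, ?_⟩, hmineq⟩⟩
  · intro X hX Y hY u hu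
    rcases Finset.mem_symmDiff.1 hu with ⟨huX, huY⟩ | ⟨huY, huX⟩
    · obtain ⟨v, hv, hins⟩ := hexMax X hX Y hY u (Finset.mem_sdiff.2 ⟨huX, huY⟩)
      rw [Finset.mem_sdiff] at hv
      refine ⟨v, Finset.mem_symmDiff.2 (Or.inr ⟨hv.1, hv.2⟩), ?_⟩
      rwa [sd_pair huX hv.2]
    · obtain ⟨v, hvX, hvY, hZ⟩ := fmax_easy hD' X hX Y hY u huY huX
      exact ⟨v, Finset.mem_symmDiff.2 (Or.inl ⟨hvX, hvY⟩), hZ⟩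
  · intro X hX Y hY u hu
    rcases Finset.mem_symmDiff.1 hu with ⟨huX, huY⟩ | ⟨huY, huX⟩
    · obtain ⟨v, hvY, hvX, hZ⟩ := fmin_easy hD' X hX Y hY u huX huY
      exact ⟨v, Finset.mem_symmDiff.2 (Or.inr ⟨hvY, hvX⟩), hZ⟩
    · obtain ⟨v, hv, hins⟩ := hcoMin X hX Y hY u (Finset.mem_sdiff.2 ⟨huY, huX⟩)
      rw [Finset.mem_sdiff] at hv
      refine ⟨v, Finset.mem_symmDiff.2 (Or.inl ⟨hv.1, hv.2⟩), ?_⟩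
      rwa [Finset.pair_comm, sd_pair hv.1 huX]
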